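/- Let a, b, n, m be integers with a ≥ 1, |b| < a and 0 ≤ n < a, and let q and r be the unique integers satisfying m·b + n = q·a + r and 0 ≤ r < a (so q = (m·b + n) div a for Euclidean division by the positive integer a). Then |q| < |m| whenever |m| ≥ 2a, and |q| ≤ |m| whenever |m| < 2a. -/
import Mathlib


/-- Lemma 6.3: if `q` and `r` are the unique integers with
`m * b + n = q * a + r` and `0 ≤ r < a`, where `a ≥ 1`, `|b| < a`,
`0 ≤ n < a`, then `|q| < |m|` when `|m| ≥ 2a` and `|q| ≤ |m|` when
`|m| < 2a`. -/
theorem abs_quotient_le (a b n m q r : ℤ)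
    (ha : 1 ≤ a) (hb : |b| < a) (hn0 : 0 ≤ n) (hna : n < a)
    (hdiv : m * b + n = q * a + r) (hr0 : 0 ≤ r) (hra : r < a) :
    (2 * a ≤ |m| → |q| < |m|) ∧ (|m| < 2 * a → |q| ≤ |m|) := by
  have hq : q * a = m * b + (n - r) := by linarith
  have h1 : |q| * a = |q * a| := by
    rw [abs_mul, abs_of_pos (by linarith : (0:ℤ) < a)]
  have h2 : |q * a| ≤ |m * b| + |n - r| := by
    rw [hq]; exact abs_add_le _ _
  have h3 : |m * b| ≤ |m| * (a - 1) := by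
    rw [abs_mul]
    exact mul_le_mul_of_nonneg_left (by omega) (abs_nonneg m)
  have h4 : |n - r| ≤ a - 1 := by
    rw [abs_le]; omega
  have key : |q| * a ≤ |m| * (a - 1) + (a - 1) := by
    rw [h1]; linarith
  constructor
  · intro hm
    have : |m| ≥ a + 1 := by omega
    nlinarith [abs_nonneg q, abs_nonneg m]
  · intro _
    nlinarith [abs_nonneg q, abs_nonneg m]
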